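/- Let X be a real normed space, let Γ : X → ℝ be a nonzero continuous linear functional, and let (φ_i)_{i≥1} be a complete system in X with Γ(φ₁) ≠ 0. Define φ̃_i := φ_i − (Γ(φ_i)/Γ(φ₁))·φ₁ for i ≥ 1. Then every φ̃_i lies in ker Γ, the linear span of {φ̃_i : i ≥ 1} is dense in ker Γ, and quantitatively: for every u ∈ ker Γ, every ε > 0, every N and coefficients a₁,…,a_N with ‖u − Σ_{i=1}^N a_i φ_i‖ ≤ ε, one has ‖u − Σ_{i=1}^N a_i φ̃_i‖ ≤ (1 + ‖Γ‖·‖φ₁‖/|Γ(φ₁)|)·ε. -/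

import Mathlib

open Finset

/-- Step of Lemma 1 of the paper: from a complete system `φ` in `X` with `Γ φ₁ ≠ 0`
one builds the system `φ̃ᵢ = φᵢ - (Γ φᵢ / Γ φ₁) φ₁` which lies in `ker Γ`, is
complete in `ker Γ`, and satisfies a quantitative approximation estimate. -/
theorem stmt0 {X : Type*} [NormedAddCommGroup X] [NormedSpace ℝ X]
    (Γ : X →L[ℝ] ℝ) (hΓ : Γ ≠ 0)
    (φ : ℕ → X)
    (hcomplete : Dense (Submodule.span ℝ (φ '' {i | 1 ≤ i}) : Set X))
    (hφ1 : Γ (φ 1) ≠ 0)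
    (φt : ℕ → X)
    (hφt : ∀ i, φt i = φ i - (Γ (φ i) / Γ (φ 1)) • φ 1) :
    (∀ i, 1 ≤ i → φt i ∈ LinearMap.ker (Γ : X →ₗ[ℝ] ℝ)) ∧
    closure (Submodule.span ℝ (φt '' {i | 1 ≤ i}) : Set X) = (LinearMap.ker (Γ : X →ₗ[ℝ] ℝ) : Set X) ∧
    (∀ u ∈ LinearMap.ker (Γ : X →ₗ[ℝ] ℝ), ∀ ε > (0:ℝ), ∀ N : ℕ, ∀ a : ℕ → ℝ,
      ‖u - ∑ i ∈ Icc 1 N, a i • φ i‖ ≤ ε →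
      ‖u - ∑ i ∈ Icc 1 N, a i • φt i‖ ≤ (1 + ‖Γ‖ * ‖φ 1‖ / |Γ (φ 1)|) * ε) := by
  have hker : ∀ i, φt i ∈ LinearMap.ker (Γ : X →ₗ[ℝ] ℝ) := by
    intro i
    simp only [LinearMap.mem_ker, hφt, ContinuousLinearMap.coe_coe, map_sub, map_smul,
      smul_eq_mul, div_mul_cancel₀ _ hφ1, sub_self]
  refine ⟨fun i _ => hker i, ?_, ?_⟩
  · -- completeness of φt in ker Γ
    set P : X →L[ℝ] X := ContinuousLinearMap.id ℝ X - Γ.smulRight ((Γ (φ 1))⁻¹ • φ 1) with hP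
    have hPx : ∀ x, P x = x - (Γ x / Γ (φ 1)) • φ 1 := by
      intro x
      simp [hP, smul_smul, div_eq_mul_inv]
    apply Set.Subset.antisymm
    · apply closure_minimal ?_ (ContinuousLinearMap.isClosed_ker Γ)
      intro x hx
      exact Submodule.span_le.2 (by rintro _ ⟨i, -, rfl⟩; exact hker i) hx
    · intro u hu
      have hΓu : Γ u = 0 := hu
      have hu' : P u = u := by rw [hPx, hΓu, zero_div, zero_smul, sub_zero]
      have h1 : u ∈ P '' closure (Submodule.span ℝ (φ '' {i | 1 ≤ i}) : Set X) := by
        rw [hcomplete.closure_eq]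
        exact ⟨u, trivial, hu'⟩
      have h2 : P '' closure (Submodule.span ℝ (φ '' {i | 1 ≤ i}) : Set X) ⊆
          closure (P '' (Submodule.span ℝ (φ '' {i | 1 ≤ i}) : Set X)) :=
        image_closure_subset_closure_image P.continuous
      have h3 : P '' (Submodule.span ℝ (φ '' {i | 1 ≤ i}) : Set X) ⊆
          (Submodule.span ℝ (φt '' {i | 1 ≤ i}) : Set X) := by
        rintro _ ⟨x, hx, rfl⟩
        have : (P : X →ₗ[ℝ] X) x ∈ Submodule.map (P : X →ₗ[ℝ] X)
            (Submodule.span ℝ (φ '' {i | 1 ≤ i})) := ⟨x, hx, rfl⟩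
        rw [Submodule.map_span] at this
        have himg : (P : X →ₗ[ℝ] X) '' (φ '' {i | 1 ≤ i}) = φt '' {i | 1 ≤ i} := by
          rw [Set.image_image]
          apply Set.image_congr
          intro i _
          simp only [ContinuousLinearMap.coe_coe]
          rw [hPx, hφt]
        rwa [himg] at this
      exact closure_mono h3 (h2 h1)
  · intro u hu ε hε N a h
    have hΓu : Γ u = 0 := hu
    set v := ∑ i ∈ Icc 1 N, a i • φ i with hv
    have hsum : ∑ i ∈ Icc 1 N, a i • φt i = v - (Γ v / Γ (φ 1)) • φ 1 := by
      simp only [hφt, smul_sub, Finset.sum_sub_distrib, smul_smul]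
      congr 1
      rw [← Finset.sum_smul]
      congr 1
      simp [hv, map_sum, map_smul, Finset.sum_div, mul_div_assoc]
    have hrepr : u - ∑ i ∈ Icc 1 N, a i • φt i
        = (u - v) - (Γ (u - v) / Γ (φ 1)) • φ 1 := by
      rw [hsum, map_sub, hΓu, zero_sub, neg_div, neg_smul]
      abel
    rw [hrepr]
    have hb : ‖(Γ (u - v) / Γ (φ 1)) • φ 1‖ ≤ ‖Γ‖ * ‖φ 1‖ / |Γ (φ 1)| * ‖u - v‖ := by
      rw [norm_smul, Real.norm_eq_abs, abs_div]
      have hΓuv : |Γ (u - v)| ≤ ‖Γ‖ * ‖u - v‖ := Γ.le_opNorm _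
      have hpos : (0:ℝ) < |Γ (φ 1)| := abs_pos.2 hφ1
      rw [div_mul_eq_mul_div, div_mul_eq_mul_div]
      rw [div_le_div_iff_of_pos_right hpos]
      nlinarith [norm_nonneg (φ 1), norm_nonneg (u - v)]
    calc ‖(u - v) - (Γ (u - v) / Γ (φ 1)) • φ 1‖
        ≤ ‖u - v‖ + ‖(Γ (u - v) / Γ (φ 1)) • φ 1‖ := norm_sub_le _ _
      _ ≤ ‖u - v‖ + ‖Γ‖ * ‖φ 1‖ / |Γ (φ 1)| * ‖u - v‖ := by linarith
      _ = (1 + ‖Γ‖ * ‖φ 1‖ / |Γ (φ 1)|) * ‖u - v‖ := by ring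
      _ ≤ (1 + ‖Γ‖ * ‖φ 1‖ / |Γ (φ 1)|) * ε := by
          apply mul_le_mul_of_nonneg_left h
          have : (0:ℝ) ≤ ‖Γ‖ * ‖φ 1‖ / |Γ (φ 1)| :=
            div_nonneg (mul_nonneg (norm_nonneg _) (norm_nonneg _)) (abs_nonneg _)
          linarith
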